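/- Let φ₁,…,φₙ: [0,∞) → ℝ be C¹, increasing, and concave, and let B, R > 0 with φᵢ'(B/R) > 0 for all i. Set Rᵢ = R·φᵢ'(B/R)/(Σⱼ φⱼ'(B/R)). Then for every B₁,…,Bₙ ≥ 0 with Σᵢ Bᵢ = B, we have Σᵢ φᵢ(Bᵢ/Rᵢ) ≤ Σᵢ φᵢ(B/R). -/

import Mathlib

open Set

/-- Tangent line bound for concave functions on `Ici 0`. -/
lemma concave_tangent_le {f : ℝ → ℝ} (hf : ConcaveOn ℝ (Ici 0) f)
    (hd : ∀ z, DifferentiableAt ℝ f z) {x y : ℝ} (hx : x ∈ Ici 0) (hy : y ∈ Ici 0) :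
    f y ≤ f x + deriv f x * (y - x) := by
  rcases lt_trichotomy y x with h | h | h
  · have := hf.deriv_le_slope hy hx h (hd x)
    rw [slope_def_field, le_div_iff₀ (by linarith : (0:ℝ) < x - y)] at this
    nlinarith
  · simp [h]
  · have := hf.slope_le_deriv hx hy h (hd x)
    rw [slope_def_field, div_le_iff₀ (by linarith : (0:ℝ) < y - x)] at this
    nlinarith

/-- Let φ₁,…,φₙ be C¹, increasing and concave on [0,∞), B, R > 0 with
φᵢ'(B/R) > 0 for all i, and set Rᵢ = R·φᵢ'(B/R)/(Σⱼ φⱼ'(B/R)).  Then for every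
B₁,…,Bₙ ≥ 0 with Σᵢ Bᵢ = B we have Σᵢ φᵢ(Bᵢ/Rᵢ) ≤ Σᵢ φᵢ(B/R). -/
theorem stmt_13 (n : ℕ) (φ : Fin n → ℝ → ℝ)
    (hC1 : ∀ i, ContDiff ℝ 1 (φ i))
    (hmono : ∀ i, StrictMonoOn (φ i) (Ici 0))
    (hconc : ∀ i, ConcaveOn ℝ (Ici 0) (φ i))
    (B R : ℝ) (hB : 0 < B) (hR : 0 < R)
    (hpos : ∀ i, 0 < deriv (φ i) (B / R))
    (Ri : Fin n → ℝ)
    (hRi : ∀ i, Ri i = R * deriv (φ i) (B / R) / (∑ j, deriv (φ j) (B / R)))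
    (Bi : Fin n → ℝ) (hBi : ∀ i, 0 ≤ Bi i) (hsum : ∑ i, Bi i = B) :
    ∑ i, φ i (Bi i / Ri i) ≤ ∑ i, φ i (B / R) := by
  rcases Nat.eq_zero_or_pos n with rfl | hn
  · simp
  set d : Fin n → ℝ := fun i => deriv (φ i) (B / R) with hd
  set S : ℝ := ∑ j, d j with hS
  have hSpos : 0 < S := Finset.sum_pos (fun i _ => hpos i) (by
    simpa using Finset.univ_nonempty_iff.2 (Fin.pos_iff_nonempty.mp hn))
  have hBR : (0:ℝ) ≤ B / R := le_of_lt (div_pos hB hR)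
  have key : ∀ i, φ i (Bi i / Ri i) ≤ φ i (B / R) + d i * (Bi i / Ri i - B / R) := by
    intro i
    refine concave_tangent_le (hconc i)
      (fun z => ((hC1 i).differentiable one_ne_zero).differentiableAt) hBR ?_
    have : 0 < Ri i := by
      rw [hRi i]; exact div_pos (mul_pos hR (hpos i)) hSpos
    exact div_nonneg (hBi i) this.le
  calc ∑ i, φ i (Bi i / Ri i)
      ≤ ∑ i, (φ i (B / R) + d i * (Bi i / Ri i - B / R)) :=
        Finset.sum_le_sum (fun i _ => key i)
    _ = ∑ i, φ i (B / R) + ∑ i, d i * (Bi i / Ri i - B / R) := by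
        rw [Finset.sum_add_distrib]
    _ = ∑ i, φ i (B / R) := by
        have hzero : ∑ i, d i * (Bi i / Ri i - B / R) = 0 := by
          have : ∀ i, d i * (Bi i / Ri i - B / R) = Bi i * S / R - d i * (B / R) := by
            intro i
            have hdi : d i ≠ 0 := (hpos i).ne'
            have hdi' : deriv (φ i) (B / R) = d i := rfl
            rw [hRi i, hdi']
            field_simp
          rw [Finset.sum_congr rfl (fun i _ => this i), Finset.sum_sub_distrib,
            ← Finset.sum_div, ← Finset.sum_mul, hsum, ← Finset.sum_mul]
          rw [← hS]
          field_simp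
          ring
        rw [hzero, add_zero]
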